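/- arXiv:2312.05884 — 6 statements merged into one kernel-verified Lean document; each statement's English description precedes it below -/
import Mathlib

section
/- Let M, N be natural numbers, let a, b, c, z be real numbers, let t = (2M+1)(2N+1), and define f(m,n) = -a·m - b·n + c·m² + z·n² for integers m, n. Assume sin(2πzs) ≠ 0 for every integer s with 1 ≤ s ≤ 2N and sin(2πcr) ≠ 0 for every integer r with 1 ≤ r ≤ 2M. Define I₂ = 2(2M+1)·∑_{s=1}^{2N} Φ(z,s,N)·cos(2πbs) and I₃ = 2(2N+1)·∑_{r=1}^{2M} Φ(c,r,M)·cos(2πar). Then the resolution Δ = (1/t²)·|∑_{m=-M}^{M} ∑_{n=-N}^{N} exp(2πi·f(m,n))|² satisfies Δ = (1/t²)·(t + I₂ + I₃ + I₂·I₃/t). -/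
open Real Finset

/-- `Φ(x, y, K) = sin(2πxy(2K − y + 1)) / sin(2πxy)`. -/
noncomputable def Phi (x : ℝ) (y : ℤ) (K : ℕ) : ℝ :=
  Real.sin (2 * π * x * y * (2 * K - y + 1)) / Real.sin (2 * π * x * y)

lemma geom_sin (θ : ℝ) (hθ : Real.sin θ ≠ 0) (L : ℕ) :
    ∑ j ∈ Finset.range L, Complex.exp ((2*(j:ℂ) - ((L:ℂ)-1)) * θ * Complex.I)
      = ((Real.sin (L*θ) / Real.sin θ : ℝ) : ℂ) := by
  set u := Complex.exp ((θ:ℂ) * Complex.I) with hu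
  set v := Complex.exp ((L:ℂ) * (θ:ℂ) * Complex.I) with hv
  have hu0 : u ≠ 0 := Complex.exp_ne_zero _
  have hv0 : v ≠ 0 := Complex.exp_ne_zero _
  have huinv : Complex.exp (-((θ:ℂ) * Complex.I)) = u⁻¹ := Complex.exp_neg _
  have hvinv : Complex.exp (-((L:ℂ) * (θ:ℂ) * Complex.I)) = v⁻¹ := Complex.exp_neg _
  have hsθ : (Real.sin θ : ℂ) = (u⁻¹ - u) * Complex.I / 2 := by
    rw [Complex.ofReal_sin, Complex.sin, ← huinv, hu, neg_mul]
  have hsLθ : (Real.sin (L*θ) : ℂ) = (v⁻¹ - v) * Complex.I / 2 := by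
    rw [Complex.ofReal_sin, Complex.sin, ← hvinv, hv]
    push_cast
    ring_nf
  have hsθ0 : (Real.sin θ : ℂ) ≠ 0 := by exact_mod_cast hθ
  have husub : u⁻¹ - u ≠ 0 := by
    intro h
    apply hsθ0
    rw [hsθ, h]; ring
  have hx : Complex.exp (2*(θ:ℂ)*Complex.I) = u^2 := by
    rw [hu, sq, ← Complex.exp_add]; ring_nf
  have hxne : u^2 ≠ 1 := by
    intro h
    apply husub
    have h1 : u * u = 1 := by rw [← sq]; exact h
    field_simp
    linear_combination -h1
  have hterm : ∀ j : ℕ, Complex.exp ((2*(j:ℂ) - ((L:ℂ)-1)) * θ * Complex.I)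
      = (v⁻¹ * u) * (u^2)^j := by
    intro j
    rw [← hx, ← Complex.exp_nat_mul, ← hvinv, hu, ← Complex.exp_add, ← Complex.exp_add]
    ring_nf
  rw [Finset.sum_congr rfl (fun j _ => hterm j), ← Finset.mul_sum,
    geom_sum_eq hxne L]
  have hpow : (u^2)^L = v^2 := by
    rw [hu, hv, ← Complex.exp_nat_mul, ← Complex.exp_nat_mul, sq, ← Complex.exp_add]
    ring_nf
  rw [hpow, Complex.ofReal_div, hsθ, hsLθ]
  have h2 : u^2 - 1 ≠ 0 := sub_ne_zero.mpr hxne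
  have hI2 : (Complex.I/2 : ℂ) ≠ 0 := by simp [Complex.I_ne_zero]
  have hrw : ∀ x : ℂ, x * Complex.I / 2 = x * (Complex.I/2) := fun x => mul_div_assoc _ _ _
  rw [hrw, hrw, mul_div_mul_right _ _ hI2]
  have h1 : (1:ℂ) - u^2 ≠ 0 := by intro h; apply hxne; linear_combination -h
  rw [eq_div_iff husub]
  field_simp
  ring

set_option maxHeartbeats 1000000 in
lemma key (N : ℕ) (b z : ℝ)
    (hz : ∀ s : ℤ, 1 ≤ s → s ≤ 2 * N → Real.sin (2 * π * z * s) ≠ 0) :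
    ‖∑ n ∈ Finset.Icc (-(N : ℤ)) N,
        Complex.exp (2 * π * Complex.I * (-b * n + z * n ^ 2))‖ ^ 2
      = (2 * N + 1) + 2 * ∑ s ∈ Finset.Icc (1 : ℤ) (2 * N),
          Phi z s N * Real.cos (2 * π * b * s) := by
  set g : ℤ → ℝ := fun n => -b * n + z * n ^ 2 with hg
  set F : ℤ → ℤ → ℂ := fun n n' => Complex.exp (2 * π * Complex.I * ((g n - g n' : ℝ) : ℂ))
    with hF
  set S : ℂ := ∑ n ∈ Finset.Icc (-(N : ℤ)) N, Complex.exp (2 * π * Complex.I * (g n)) with hS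
  have hconj : (starRingEnd ℂ) S
      = ∑ n ∈ Finset.Icc (-(N : ℤ)) N, Complex.exp (-(2 * π * Complex.I * (g n))) := by
    rw [hS, map_sum]
    refine Finset.sum_congr rfl fun n _ => ?_
    rw [← Complex.exp_conj]
    congr 1
    simp only [map_mul, Complex.conj_I, Complex.conj_ofReal, map_ofNat]
    ring
  have hSS : S * (starRingEnd ℂ) S
      = ∑ p ∈ (Finset.Icc (-(N : ℤ)) N) ×ˢ (Finset.Icc (-(N : ℤ)) N), F p.1 p.2 := by
    rw [hconj, hS, Finset.sum_mul_sum, ← Finset.sum_product']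
    refine Finset.sum_congr rfl fun p _ => ?_
    rw [hF, ← Complex.exp_add]
    congr 1
    push_cast
    ring
  have hfib : ∑ p ∈ (Finset.Icc (-(N : ℤ)) N) ×ˢ (Finset.Icc (-(N : ℤ)) N), F p.1 p.2
      = ∑ s ∈ Finset.Icc (-(2 * N : ℤ)) (2 * N),
          ∑ p ∈ ((Finset.Icc (-(N : ℤ)) N) ×ˢ (Finset.Icc (-(N : ℤ)) N)).filter
            (fun p => p.1 - p.2 = s), F p.1 p.2 := by
    refine (Finset.sum_fiberwise_of_maps_to (fun p hp => ?_) _).symm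
    simp only [Finset.mem_product, Finset.mem_Icc] at hp ⊢
    omega
  have hfiber : ∀ s : ℤ,
      ∑ p ∈ ((Finset.Icc (-(N : ℤ)) N) ×ˢ (Finset.Icc (-(N : ℤ)) N)).filter
        (fun p => p.1 - p.2 = s), F p.1 p.2
      = ∑ n ∈ Finset.Icc (max (-(N : ℤ)) (-(N : ℤ) - s)) (min (N : ℤ) ((N : ℤ) - s)),
          F (n + s) n := by
    intro s
    refine Finset.sum_nbij' (fun p => p.2) (fun n => (n + s, n)) ?_ ?_ ?_ ?_ ?_
    · intro p hp
      simp only [Finset.mem_filter, Finset.mem_product, Finset.mem_Icc] at hp ⊢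
      omega
    · intro n hn
      simp only [Finset.mem_filter, Finset.mem_product, Finset.mem_Icc] at hn ⊢
      omega
    · intro p hp
      simp only [Finset.mem_filter, Finset.mem_product, Finset.mem_Icc] at hp
      exact Prod.ext (by simp; omega) rfl
    · intro n hn
      rfl
    · intro p hp
      simp only [Finset.mem_filter, Finset.mem_product, Finset.mem_Icc] at hp
      have h1 : p.1 = p.2 + s := by omega
      show F p.1 p.2 = F (p.2 + s) p.2
      rw [h1]
  set fib : ℤ → ℂ := fun s =>
    ∑ n ∈ Finset.Icc (max (-(N : ℤ)) (-(N : ℤ) - s)) (min (N : ℤ) ((N : ℤ) - s)), F (n + s) n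
    with hfibdef
  have hFconj : ∀ x y : ℤ, (starRingEnd ℂ) (F x y) = F y x := by
    intro x y
    rw [hF, ← Complex.exp_conj]
    congr 1
    simp only [map_mul, Complex.conj_I, Complex.conj_ofReal, map_ofNat]
    push_cast
    ring
  have hnegfib : ∀ s : ℤ, fib (-s) = (starRingEnd ℂ) (fib s) := by
    intro s
    rw [hfibdef, map_sum]
    refine Finset.sum_nbij' (fun n => n - s) (fun m => m + s) ?_ ?_ ?_ ?_ ?_
    · intro n hn
      simp only [Finset.mem_Icc] at hn ⊢
      omega
    · intro m hm
      simp only [Finset.mem_Icc] at hm ⊢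
      omega
    · intro n _; show n - s + s = n; omega
    · intro m _; show m + s - s = m; omega
    · intro n _
      show F (n + -s) n = (starRingEnd ℂ) (F (n - s + s) (n - s))
      rw [hFconj]
      congr 1
      omega
  have h0 : fib 0 = ((2 * N + 1 : ℝ) : ℂ) := by
    have hcard : ((N : ℤ) + 1 - -(N : ℤ)) = ((2 * N + 1 : ℕ) : ℤ) := by push_cast; ring
    simp only [hfibdef, sub_zero, max_self, min_self, add_zero, hF, sub_self,
      Complex.ofReal_zero, mul_zero, Complex.exp_zero, Finset.sum_const, nsmul_eq_mul,
      mul_one, Int.card_Icc, hcard, Int.toNat_natCast]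
    push_cast
    ring
  have hpos : ∀ s : ℤ, 1 ≤ s → s ≤ 2 * N → fib s
      = Complex.exp (-((2 * π * b * s : ℝ) : ℂ) * Complex.I) * ((Phi z s N : ℝ) : ℂ) := by
    intro s h1 h2
    have hmax : max (-(N : ℤ)) (-(N : ℤ) - s) = -(N : ℤ) := by omega
    have hmin : min (N : ℤ) ((N : ℤ) - s) = (N : ℤ) - s := by omega
    obtain ⟨L, hL⟩ : ∃ L : ℕ, (L : ℤ) = 2 * (N : ℤ) - s + 1 :=
      ⟨(2 * (N : ℤ) - s + 1).toNat, Int.toNat_of_nonneg (by omega)⟩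
    have hLr : (L : ℝ) = 2 * (N : ℝ) - (s : ℝ) + 1 := by exact_mod_cast hL
    have hLc : (L : ℂ) = 2 * (N : ℂ) - (s : ℂ) + 1 := by exact_mod_cast hL
    have hre : fib s = ∑ j ∈ Finset.range L, F (-(N : ℤ) + j + s) (-(N : ℤ) + j) := by
      show (∑ n ∈ Finset.Icc (max (-(N : ℤ)) (-(N : ℤ) - s)) (min (N : ℤ) ((N : ℤ) - s)),
        F (n + s) n) = _
      rw [hmax, hmin]
      refine Finset.sum_nbij' (fun n => (n + N).toNat) (fun j => -(N : ℤ) + j) ?_ ?_ ?_ ?_ ?_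
      · intro n hn; simp only [Finset.mem_Icc, Finset.mem_range] at hn ⊢; omega
      · intro j hj; simp only [Finset.mem_Icc, Finset.mem_range] at hj ⊢; omega
      · intro n hn; simp only [Finset.mem_Icc] at hn
        show -(N : ℤ) + ((n + (N : ℤ)).toNat : ℤ) = n; omega
      · intro j hj; simp only [Finset.mem_range] at hj
        show ((-(N : ℤ) + (j : ℤ) + (N : ℤ)).toNat) = j; omega
      · intro n hn; simp only [Finset.mem_Icc] at hn
        show F (n + s) n = F (-(N : ℤ) + ((n + (N : ℤ)).toNat : ℤ) + s) (-(N : ℤ) + ((n + (N : ℤ)).toNat : ℤ))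
        have e1 : -(N : ℤ) + ((n + (N : ℤ)).toNat : ℤ) = n := by omega
        rw [e1]
    have hterm : ∀ j : ℕ, F (-(N : ℤ) + j + s) (-(N : ℤ) + j)
        = Complex.exp (-((2 * π * b * s : ℝ) : ℂ) * Complex.I)
          * Complex.exp ((2 * (j : ℂ) - ((L : ℂ) - 1)) * ((2 * π * z * s : ℝ) : ℂ) * Complex.I) := by
      intro j
      simp only [hF]
      rw [← Complex.exp_add]
      refine congrArg Complex.exp ?_
      simp only [hg]
      rw [hLc]
      push_cast
      ring
    have harg : (L : ℝ) * (2 * π * z * s) = 2 * π * z * s * (2 * (N : ℝ) - (s : ℝ) + 1) := by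
      rw [hLr]; ring
    rw [hre, Finset.sum_congr rfl (fun j _ => hterm j), ← Finset.mul_sum,
      geom_sin (2 * π * z * s) (hz s h1 h2) L]
    congr 1
    rw [Complex.ofReal_inj]
    rw [Phi, harg]
  -- assemble
  have hsplit : Finset.Icc (-(2 * N : ℤ)) (2 * N)
      = (Finset.Icc (-(2 * N : ℤ)) (-1) ∪ {0}) ∪ Finset.Icc (1 : ℤ) (2 * N) := by
    ext x; simp only [Finset.mem_union, Finset.mem_Icc, Finset.mem_singleton]; omega
  have hd1 : Disjoint (Finset.Icc (-(2 * N : ℤ)) (-1)) ({0} : Finset ℤ) := by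
    simp only [Finset.disjoint_left, Finset.mem_Icc, Finset.mem_singleton]
    intro x hx; omega
  have hd2 : Disjoint (Finset.Icc (-(2 * N : ℤ)) (-1) ∪ {0}) (Finset.Icc (1 : ℤ) (2 * N)) := by
    simp only [Finset.disjoint_left, Finset.mem_union, Finset.mem_Icc, Finset.mem_singleton]
    intro x hx; omega
  have hnegsum : ∑ s ∈ Finset.Icc (-(2 * N : ℤ)) (-1), fib s
      = ∑ s ∈ Finset.Icc (1 : ℤ) (2 * N), (starRingEnd ℂ) (fib s) := by
    refine Finset.sum_nbij' (fun s => -s) (fun s => -s) ?_ ?_ ?_ ?_ ?_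
    · intro s hs; simp only [Finset.mem_Icc] at *; omega
    · intro s hs; simp only [Finset.mem_Icc] at *; omega
    · intro s _; show -(-s) = s; omega
    · intro s _; show -(-s) = s; omega
    · intro s _
      show fib s = (starRingEnd ℂ) (fib (-s))
      rw [hnegfib, Complex.conj_conj]
  have hcos : ∀ s ∈ Finset.Icc (1 : ℤ) (2 * N),
      (starRingEnd ℂ) (fib s) + fib s
        = ((2 * (Phi z s N * Real.cos (2 * π * b * s)) : ℝ) : ℂ) := by
    intro s hs
    simp only [Finset.mem_Icc] at hs
    rw [hpos s hs.1 hs.2, map_mul, ← Complex.exp_conj, Complex.conj_ofReal]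
    have hc : (starRingEnd ℂ) (-((2 * π * b * s : ℝ) : ℂ) * Complex.I)
        = ((2 * π * b * s : ℝ) : ℂ) * Complex.I := by
      simp only [map_mul, map_neg, Complex.conj_I, Complex.conj_ofReal]
      ring
    rw [hc]
    push_cast
    rw [Complex.cos]
    ring
  have hsum2 : ∑ s ∈ Finset.Icc (1 : ℤ) (2 * N), (starRingEnd ℂ) (fib s)
        + ∑ s ∈ Finset.Icc (1 : ℤ) (2 * N), fib s
      = ((2 * ∑ s ∈ Finset.Icc (1 : ℤ) (2 * N), Phi z s N * Real.cos (2 * π * b * s) : ℝ) : ℂ) := by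
    rw [← Finset.sum_add_distrib, Finset.sum_congr rfl hcos]
    push_cast
    rw [Finset.mul_sum]
  have hSrw : ∑ n ∈ Finset.Icc (-(N : ℤ)) N,
      Complex.exp (2 * π * Complex.I * (-b * n + z * n ^ 2)) = S := by
    rw [hS]
    refine Finset.sum_congr rfl fun n _ => congrArg Complex.exp ?_
    simp only [hg]
    push_cast
    ring
  rw [hSrw, Complex.sq_norm, ← Complex.ofReal_inj, ← Complex.mul_conj, hSS, hfib,
    Finset.sum_congr rfl (fun s _ => hfiber s)]
  show ∑ s ∈ Finset.Icc (-(2 * N : ℤ)) (2 * N), fib s = _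
  rw [hsplit, Finset.sum_union hd2, Finset.sum_union hd1, Finset.sum_singleton, h0, hnegsum]
  rw [show ∀ A B C : ℂ, (A + B) + C = B + (A + C) from fun A B C => by ring]
  rw [hsum2]
  push_cast
  ring

theorem resolution_closed_form (M N : ℕ) (a b c z : ℝ)
    (hz : ∀ s : ℤ, 1 ≤ s → s ≤ 2 * N → Real.sin (2 * π * z * s) ≠ 0)
    (hc : ∀ r : ℤ, 1 ≤ r → r ≤ 2 * M → Real.sin (2 * π * c * r) ≠ 0)
    (t : ℝ) (ht : t = (2 * M + 1) * (2 * N + 1))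
    (f : ℤ → ℤ → ℝ)
    (hf : ∀ m n : ℤ, f m n = -a * m - b * n + c * m ^ 2 + z * n ^ 2)
    (I₂ I₃ Δ : ℝ)
    (hI₂ : I₂ = 2 * (2 * M + 1) *
      ∑ s ∈ Finset.Icc (1 : ℤ) (2 * N), Phi z s N * Real.cos (2 * π * b * s))
    (hI₃ : I₃ = 2 * (2 * N + 1) *
      ∑ r ∈ Finset.Icc (1 : ℤ) (2 * M), Phi c r M * Real.cos (2 * π * a * r))
    (hΔ : Δ = (1 / t ^ 2) *
      ‖(∑ m ∈ Finset.Icc (-(M : ℤ)) M, ∑ n ∈ Finset.Icc (-(N : ℤ)) N,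
        Complex.exp (2 * π * Complex.I * (f m n)))‖ ^ 2) :
    Δ = (1 / t ^ 2) * (t + I₂ + I₃ + I₂ * I₃ / t) := by
  have hprod : (∑ m ∈ Finset.Icc (-(M : ℤ)) M, ∑ n ∈ Finset.Icc (-(N : ℤ)) N,
        Complex.exp (2 * π * Complex.I * (f m n)))
      = (∑ m ∈ Finset.Icc (-(M : ℤ)) M,
          Complex.exp (2 * π * Complex.I * (-a * m + c * m ^ 2)))
        * (∑ n ∈ Finset.Icc (-(N : ℤ)) N,
          Complex.exp (2 * π * Complex.I * (-b * n + z * n ^ 2))) := by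
    rw [Finset.sum_mul_sum]
    refine Finset.sum_congr rfl fun m _ => Finset.sum_congr rfl fun n _ => ?_
    rw [← Complex.exp_add]
    refine congrArg Complex.exp ?_
    rw [hf]
    push_cast
    ring
  rw [hΔ, hprod, norm_mul, mul_pow, key N b z hz, key M a c hc, hI₂, hI₃, ht]
  have h1 : (2 * (M : ℝ) + 1) ≠ 0 := by positivity
  have h2 : (2 * (N : ℝ) + 1) ≠ 0 := by positivity
  field_simp
  ring
end

section
/- Let N be a natural number and let b, z be real numbers with sin(2πzs) ≠ 0 for every integer s with 1 ≤ s ≤ 2N. Then the resolution for a uniform linear array, Δ = (1/(2N+1)²)·|∑_{n=-N}^{N} exp(2πi·(-b·n + z·n²))|², satisfies Δ = 1/(2N+1) + (2/(2N+1)²)·∑_{s=1}^{2N} Φ(z,s,N)·cos(2πbs). -/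
open Real Finset


lemma mulI_add (x y : ℝ) : Complex.exp ((x:ℂ) * Complex.I) * Complex.exp ((y:ℂ) * Complex.I)
    = Complex.exp (((x+y:ℝ):ℂ) * Complex.I) := by
  rw [← Complex.exp_add]; push_cast; ring_nf

lemma exp_sub_exp (x : ℝ) :
    Complex.exp ((x:ℂ) * Complex.I) - Complex.exp ((-x:ℝ) * Complex.I)
      = 2 * Real.sin x * Complex.I := by
  rw [Complex.exp_mul_I, Complex.exp_mul_I]
  push_cast
  rw [Complex.cos_neg, Complex.sin_neg, ← Complex.ofReal_sin]
  ring

lemma dirichlet_range (θ : ℝ) (hθ : Real.sin θ ≠ 0) (L : ℕ) :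
    ∑ j ∈ Finset.range L, Complex.exp (((θ * (2*(j:ℝ) - ((L:ℝ)-1)) : ℝ):ℂ) * Complex.I)
      = ((Real.sin ((L:ℝ)*θ) / Real.sin θ : ℝ) : ℂ) := by
  have hs : (Real.sin θ : ℂ) ≠ 0 := by exact_mod_cast hθ
  have key : (∑ j ∈ Finset.range L,
        Complex.exp (((θ * (2*(j:ℝ) - ((L:ℝ)-1)) : ℝ):ℂ) * Complex.I))
        * (2 * (Real.sin θ : ℂ) * Complex.I)
      = 2 * (Real.sin ((L:ℝ)*θ) : ℂ) * Complex.I := by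
    rw [Finset.sum_mul]
    have step : ∀ j ∈ Finset.range L,
        Complex.exp (((θ * (2*(j:ℝ) - ((L:ℝ)-1)) : ℝ):ℂ) * Complex.I)
          * (2 * (Real.sin θ : ℂ) * Complex.I)
        = (fun j : ℕ => Complex.exp (((θ * (2*(j:ℝ) - (L:ℝ)) : ℝ):ℂ) * Complex.I)) (j+1)
          - (fun j : ℕ => Complex.exp (((θ * (2*(j:ℝ) - (L:ℝ)) : ℝ):ℂ) * Complex.I)) j := by
      intro j _
      rw [← exp_sub_exp θ, mul_sub, mulI_add, mulI_add]
      congr 2 <;> push_cast <;> ring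
    rw [Finset.sum_congr rfl step,
      Finset.sum_range_sub (fun j : ℕ => Complex.exp (((θ * (2*(j:ℝ) - (L:ℝ)) : ℝ):ℂ) * Complex.I))]
    have h1 : θ * (2*(L:ℝ) - L) = (L:ℝ)*θ := by ring
    have h0 : θ * (2*(0:ℕ) - (L:ℝ)) = -((L:ℝ)*θ) := by push_cast; ring
    rw [h1, h0, exp_sub_exp ((L:ℝ)*θ)]
  have h2I : (2:ℂ) * Complex.I ≠ 0 := by simp [Complex.I_ne_zero]
  rw [Complex.ofReal_div, eq_div_iff hs]
  apply mul_right_cancel₀ h2I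
  linear_combination key

lemma dirichlet_Icc (θ : ℝ) (hθ : Real.sin θ ≠ 0) (a c : ℤ) (hac : a ≤ c + 1) :
    ∑ m ∈ Finset.Icc a c, Complex.exp (((θ * (2*(m:ℝ) - (a:ℝ) - (c:ℝ)) : ℝ):ℂ) * Complex.I)
      = ((Real.sin (((c:ℝ) - (a:ℝ) + 1)*θ) / Real.sin θ : ℝ) : ℂ) := by
  set L : ℕ := (c + 1 - a).toNat with hLdef
  have hL : (L : ℤ) = c + 1 - a := Int.toNat_of_nonneg (by omega)
  have hLR : (L : ℝ) = (c:ℝ) - (a:ℝ) + 1 := by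
    have := congrArg (fun t : ℤ => (t : ℝ)) hL
    push_cast at this
    linarith
  have := dirichlet_range θ hθ L
  rw [← hLR]
  rw [← this]
  refine Finset.sum_nbij' (fun m : ℤ => (m - a).toNat) (fun k : ℕ => a + (k:ℤ)) ?_ ?_ ?_ ?_ ?_
  · intro m hm
    simp only [Finset.mem_Icc] at hm
    simp only [Finset.mem_range]
    omega
  · intro k hk
    simp only [Finset.mem_range] at hk
    simp only [Finset.mem_Icc]
    omega
  · intro m hm; simp only [Finset.mem_Icc] at hm
    show a + ((m - a).toNat : ℤ) = m; omega
  · intro k hk; simp only [Finset.mem_range] at hk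
    show ((a + (k:ℤ)) - a).toNat = k; omega
  · intro m hm
    simp only [Finset.mem_Icc] at hm
    have h1 : ((((m - a).toNat : ℕ)) : ℝ) = (m:ℝ) - (a:ℝ) := by
      have : (((m - a).toNat : ℤ) : ℝ) = ((m - a : ℤ) : ℝ) := by
        rw [Int.toNat_of_nonneg (by omega)]
      push_cast at this
      linarith
    have har : θ * (2*((m:ℝ)) - (a:ℝ) - (c:ℝ))
        = θ * (2 * ((((m - a).toNat : ℕ)):ℝ) - ((L:ℝ) - 1)) := by
      rw [h1, hLR]; ring
    rw [har]

lemma conj_expI (x : ℝ) :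
    (starRingEnd ℂ) (Complex.exp ((x:ℂ) * Complex.I)) = Complex.exp (((-x:ℝ):ℂ) * Complex.I) := by
  rw [← Complex.exp_conj]
  congr 1
  simp [Complex.conj_I]

lemma exp_add_exp (x : ℝ) :
    Complex.exp ((x:ℂ) * Complex.I) + Complex.exp (((-x:ℝ):ℂ) * Complex.I)
      = 2 * Real.cos x := by
  rw [Complex.exp_mul_I, Complex.exp_mul_I]
  push_cast
  rw [Complex.cos_neg, Complex.sin_neg, ← Complex.ofReal_cos]
  ring

theorem ula_resolution_closed_form (N : ℕ) (b z : ℝ)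
    (hz : ∀ s : ℤ, 1 ≤ s → s ≤ 2 * N → Real.sin (2 * π * z * s) ≠ 0)
    (Δ : ℝ)
    (hΔ : Δ = (1 / (2 * (N : ℝ) + 1) ^ 2) *
      ‖∑ n ∈ Finset.Icc (-(N : ℤ)) N,
        Complex.exp (2 * π * Complex.I * (-b * n + z * (n : ℝ) ^ 2))‖ ^ 2) :
    Δ = 1 / (2 * (N : ℝ) + 1) + (2 / (2 * (N : ℝ) + 1) ^ 2) *
      ∑ s ∈ Finset.Icc (1 : ℤ) (2 * N), Phi z s N * Real.cos (2 * π * b * s) := by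
  set I : Finset ℤ := Finset.Icc (-(N : ℤ)) N with hI
  set w : ℤ → ℝ := fun n => 2 * π * (-b * n + z * (n:ℝ)^2) with hw
  set S : ℂ := ∑ n ∈ I, Complex.exp (((w n : ℝ):ℂ) * Complex.I) with hS
  -- rewrite the sum in hΔ as S
  have hSeq : (∑ n ∈ I, Complex.exp (2 * π * Complex.I * (-b * n + z * (n : ℝ) ^ 2))) = S := by
    refine Finset.sum_congr rfl fun n _ => ?_
    congr 1
    push_cast [hw]
    ring
  rw [hSeq] at hΔ
  -- |S|^2 = re (S * conj S)
  have habs : ‖S‖ ^ 2 = (S * (starRingEnd ℂ) S).re := by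
    rw [Complex.mul_conj, Complex.sq_norm, Complex.ofReal_re]
  -- conj S
  have hconjS : (starRingEnd ℂ) S = ∑ m ∈ I, Complex.exp (((-(w m) : ℝ):ℂ) * Complex.I) := by
    rw [hS, map_sum]
    exact Finset.sum_congr rfl fun m _ => conj_expI (w m)
  -- product as double sum
  have hprod : S * (starRingEnd ℂ) S
      = ∑ p ∈ I ×ˢ I, Complex.exp ((((w p.1 - w p.2) : ℝ):ℂ) * Complex.I) := by
    rw [hconjS, hS, Finset.sum_mul_sum, ← Finset.sum_product']
    refine Finset.sum_congr rfl fun p _ => ?_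
    rw [mulI_add]
    congr 2
  set F : ℤ × ℤ → ℂ := fun p => Complex.exp ((((w p.1 - w p.2):ℝ):ℂ) * Complex.I) with hF
  have hsplit : ∑ p ∈ I ×ˢ I, F p
      = (∑ p ∈ (I ×ˢ I).filter (fun p => p.1 = p.2), F p)
        + ((∑ p ∈ (I ×ˢ I).filter (fun p => p.2 < p.1), F p)
          + (∑ p ∈ (I ×ˢ I).filter (fun p => p.1 < p.2), F p)) := by
    rw [← Finset.sum_filter_add_sum_filter_not (I ×ˢ I) (fun p => p.1 = p.2) F]
    congr 1
    rw [← Finset.sum_filter_add_sum_filter_not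
      ((I ×ˢ I).filter (fun p => ¬ p.1 = p.2)) (fun p => p.2 < p.1) F]
    congr 1
    · rw [Finset.filter_filter]
      apply Finset.sum_congr _ (fun _ _ => rfl)
      apply Finset.filter_congr
      intro p _
      constructor
      · intro hp; exact hp.2
      · intro hp; exact ⟨by omega, hp⟩
    · rw [Finset.filter_filter]
      apply Finset.sum_congr _ (fun _ _ => rfl)
      apply Finset.filter_congr
      intro p _
      constructor
      · intro hp; omega
      · intro hp; omega
  have hdiag : ∑ p ∈ (I ×ˢ I).filter (fun p => p.1 = p.2), F p = ((2*(N:ℝ)+1 : ℝ) : ℂ) := by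
    have h1 : ∀ p ∈ (I ×ˢ I).filter (fun p : ℤ × ℤ => p.1 = p.2), F p = 1 := by
      intro p hp
      simp only [Finset.mem_filter] at hp
      rw [hF]
      simp only
      rw [hp.2, sub_self]
      simp
    rw [Finset.sum_congr rfl h1, Finset.sum_const, nsmul_eq_mul, mul_one]
    have hcard : ((I ×ˢ I).filter (fun p : ℤ × ℤ => p.1 = p.2)).card = 2 * N + 1 := by
      have : (I ×ˢ I).filter (fun p : ℤ × ℤ => p.1 = p.2) = I.image (fun n => (n, n)) := by
        ext ⟨x, y⟩
        simp only [Finset.mem_filter, Finset.mem_product, Finset.mem_image]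
        constructor
        · rintro ⟨⟨h1, h2⟩, h3⟩
          subst h3
          exact ⟨x, h1, rfl⟩
        · rintro ⟨n, hn, h⟩
          cases h
          exact ⟨⟨hn, hn⟩, rfl⟩
      rw [this, Finset.card_image_of_injective _
        (fun a b h => by simpa using congrArg Prod.fst h)]
      rw [hI, Int.card_Icc]
      omega
    rw [hcard]
    push_cast
    ring
  have hP : ∑ p ∈ (I ×ˢ I).filter (fun p => p.2 < p.1), F p
      = ∑ s ∈ Finset.Icc (1:ℤ) (2*N),
          Complex.exp (((-(2*π*b*s) : ℝ):ℂ) * Complex.I) * ((Phi z s N : ℝ):ℂ) := by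
    have h1 : ∑ p ∈ (I ×ˢ I).filter (fun p => p.2 < p.1), F p
        = ∑ q ∈ (Finset.Icc (1:ℤ) (2*(N:ℤ))).sigma (fun s => Finset.Icc (-(N:ℤ)) ((N:ℤ) - s)),
            F (q.2 + q.1, q.2) := by
      symm
      refine Finset.sum_nbij' (fun q : (_ : ℤ) × ℤ => (q.2 + q.1, q.2))
        (fun p : ℤ × ℤ => ⟨p.1 - p.2, p.2⟩) ?_ ?_ ?_ ?_ ?_
      · rintro ⟨s, m⟩ hq
        simp only [Finset.mem_sigma, Finset.mem_Icc] at hq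
        simp only [Finset.mem_filter, Finset.mem_product, hI, Finset.mem_Icc]
        constructor
        · constructor <;> omega
        · show m < m + s; omega
      · rintro ⟨n, m⟩ hp
        simp only [Finset.mem_filter, Finset.mem_product, hI, Finset.mem_Icc] at hp
        simp only [Finset.mem_sigma, Finset.mem_Icc]
        obtain ⟨⟨h1, h2⟩, h3⟩ := hp
        exact ⟨⟨by omega, by omega⟩, by omega, by omega⟩
      · rintro ⟨s, m⟩ _
        show (⟨(m + s) - m, m⟩ : (_ : ℤ) × ℤ) = ⟨s, m⟩
        congr 1
        omega
      · rintro ⟨n, m⟩ _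
        show (m + (n - m), m) = (n, m)
        congr 1
        omega
      · rintro ⟨s, m⟩ _
        rfl
    rw [h1, Finset.sum_sigma]
    refine Finset.sum_congr rfl fun s hs => ?_
    simp only [Finset.mem_Icc] at hs
    have hθ : Real.sin (2*π*z*(s:ℝ)) ≠ 0 := hz s hs.1 hs.2
    have hinner : ∀ m ∈ Finset.Icc (-(N:ℤ)) ((N:ℤ) - s),
        F (m + s, m) = Complex.exp (((-(2*π*b*s) : ℝ):ℂ) * Complex.I)
          * Complex.exp ((((2*π*z*(s:ℝ)) * (2*(m:ℝ) - ((-(N:ℤ) : ℤ):ℝ) - (((N:ℤ) - s : ℤ):ℝ)) : ℝ):ℂ)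
              * Complex.I) := by
      intro m _
      rw [hF]
      simp only
      rw [mulI_add]
      congr 2
      push_cast [hw]
      ring
    rw [Finset.sum_congr rfl hinner, ← Finset.mul_sum,
      dirichlet_Icc (2*π*z*(s:ℝ)) hθ (-(N:ℤ)) ((N:ℤ) - s) (by omega)]
    congr 1
    rw [Phi]
    congr 2
    push_cast
    ring
  have hQ : ∑ p ∈ (I ×ˢ I).filter (fun p => p.1 < p.2), F p
      = (starRingEnd ℂ) (∑ p ∈ (I ×ˢ I).filter (fun p => p.2 < p.1), F p) := by
    rw [map_sum]
    refine Finset.sum_nbij' (fun p : ℤ × ℤ => (p.2, p.1)) (fun p : ℤ × ℤ => (p.2, p.1))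
      ?_ ?_ ?_ ?_ ?_
    · rintro ⟨n, m⟩ hp
      simp only [Finset.mem_filter, Finset.mem_product, hI, Finset.mem_Icc] at hp ⊢
      exact ⟨⟨hp.1.2, hp.1.1⟩, hp.2⟩
    · rintro ⟨n, m⟩ hp
      simp only [Finset.mem_filter, Finset.mem_product, hI, Finset.mem_Icc] at hp ⊢
      exact ⟨⟨hp.1.2, hp.1.1⟩, hp.2⟩
    · rintro ⟨n, m⟩ _; rfl
    · rintro ⟨n, m⟩ _; rfl
    · rintro ⟨n, m⟩ _
      rw [hF]
      simp only
      rw [conj_expI]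
      congr 2
      ring
  have hPQ : (∑ p ∈ (I ×ˢ I).filter (fun p => p.2 < p.1), F p)
        + (∑ p ∈ (I ×ˢ I).filter (fun p => p.1 < p.2), F p)
      = ((∑ s ∈ Finset.Icc (1:ℤ) (2*N), Phi z s N * (2 * Real.cos (2*π*b*s)) : ℝ) : ℂ) := by
    rw [hQ, hP, map_sum, ← Finset.sum_add_distrib, Complex.ofReal_sum]
    refine Finset.sum_congr rfl fun s _ => ?_
    rw [map_mul, conj_expI, Complex.conj_ofReal]
    have : (-(-(2*π*b*(s:ℝ))) : ℝ) = 2*π*b*(s:ℝ) := by ring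
    rw [this]
    rw [show Complex.exp (((-(2*π*b*(s:ℝ)):ℝ):ℂ) * Complex.I) * ((Phi z s N : ℝ):ℂ)
        + Complex.exp (((2*π*b*(s:ℝ):ℝ):ℂ) * Complex.I) * ((Phi z s N : ℝ):ℂ)
      = ((Phi z s N : ℝ):ℂ) * (Complex.exp (((2*π*b*(s:ℝ):ℝ):ℂ) * Complex.I)
        + Complex.exp (((-(2*π*b*(s:ℝ)):ℝ):ℂ) * Complex.I)) from by ring]
    rw [exp_add_exp (2*π*b*(s:ℝ))]
    push_cast
    ring
  -- assemble
  have hre : ‖S‖ ^ 2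
      = (2*(N:ℝ)+1) + ∑ s ∈ Finset.Icc (1:ℤ) (2*N), Phi z s N * (2 * Real.cos (2*π*b*s)) := by
    rw [habs, hprod, hsplit, hdiag, hPQ, ← Complex.ofReal_add, Complex.ofReal_re]
  rw [hΔ, hre]
  have h2N1 : (2*(N:ℝ)+1) ≠ 0 := by positivity
  have hsum2 : ∑ s ∈ Finset.Icc (1:ℤ) (2*N), Phi z s N * (2 * Real.cos (2*π*b*s))
      = 2 * ∑ s ∈ Finset.Icc (1:ℤ) (2*N), Phi z s N * Real.cos (2*π*b*s) := by
    rw [Finset.mul_sum]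
    exact Finset.sum_congr rfl fun s _ => by ring
  rw [hsum2]
  field_simp
end

section
/- Let M, N be natural numbers, let a, b, c, z be real numbers with sin(2πzs) ≠ 0 for every integer s with 1 ≤ s ≤ 2N, and define f(m,n) = -a·m - b·n + c·m² + z·n² for integers m, n. Then ∑_{s=1}^{2N} ∑_{m=-M}^{M} ∑_{n=-N}^{N-s} [exp(2πi·(f(m,n+s) − f(m,n))) + exp(2πi·(f(m,n) − f(m,n+s)))] = 2(2M+1)·∑_{s=1}^{2N} Φ(z,s,N)·cos(2πbs). -/
open Real Finset

private lemma tel_sum (g : ℤ → ℝ) (lo hi : ℤ) (h : lo - 1 ≤ hi) :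
    ∑ n ∈ Finset.Icc lo hi, (g (n + 1) - g n) = g (hi + 1) - g lo := by
  obtain ⟨d, rfl⟩ : ∃ d : ℕ, hi = lo - 1 + d := ⟨(hi - (lo - 1)).toNat, by omega⟩
  clear h
  induction d with
  | zero =>
      rw [Finset.Icc_eq_empty (by omega)]
      simp [show lo - 1 + (0 : ℕ) + 1 = lo by push_cast; ring]
  | succ k ih =>
      have hins : Finset.Icc lo (lo - 1 + (k + 1 : ℕ)) =
          insert (lo - 1 + (k + 1 : ℕ)) (Finset.Icc lo (lo - 1 + (k : ℕ))) := by
        ext x; simp only [Finset.mem_Icc, Finset.mem_insert]; push_cast; omega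
      rw [hins, Finset.sum_insert (by simp only [Finset.mem_Icc]; push_cast; omega), ih]
      have : lo - 1 + ((k : ℕ) + 1 : ℕ) + 1 = (lo - 1 + (k : ℕ) + 1) + 1 := by push_cast; ring
      rw [this]
      have : (lo - 1 + ((k : ℕ) + 1 : ℕ) : ℤ) = lo - 1 + (k : ℕ) + 1 := by push_cast; ring
      rw [this]
      ring

private lemma cos_sum (u B : ℝ) (s : ℤ) (N : ℕ) (hs2 : s ≤ 2 * N) :
    Real.sin u * ∑ n ∈ Finset.Icc (-(N : ℤ)) ((N : ℤ) - s),
        2 * Real.cos (u * (2 * n + s) - B)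
      = 2 * Real.sin (u * (2 * N - s + 1)) * Real.cos B := by
  have key : ∀ X : ℝ, Real.sin (X + u) - Real.sin (X - u) = Real.sin u * (2 * Real.cos X) := by
    intro X; rw [Real.sin_add, Real.sin_sub]; ring
  have key2 : ∀ Y : ℝ, Real.sin (Y - B) - Real.sin (-Y - B) = 2 * Real.sin Y * Real.cos B := by
    intro Y; rw [Real.sin_sub, Real.sin_sub, Real.sin_neg, Real.cos_neg]; ring
  set g : ℤ → ℝ := fun n => Real.sin (u * (2 * n + s - 1) - B) with hg
  have h := tel_sum g (-(N : ℤ)) ((N : ℤ) - s) (by omega)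
  rw [Finset.mul_sum]
  have hcongr : ∀ n ∈ Finset.Icc (-(N : ℤ)) ((N : ℤ) - s),
      Real.sin u * (2 * Real.cos (u * (2 * n + s) - B)) = g (n + 1) - g n := by
    intro n _
    simp only [hg]
    have e1 : u * (2 * ((n : ℝ) + 1) + (s : ℝ) - 1) - B = (u * (2 * n + s) - B) + u := by ring
    have e2 : u * (2 * (n : ℝ) + (s : ℝ) - 1) - B = (u * (2 * n + s) - B) - u := by ring
    push_cast
    rw [e1, e2, key]
  rw [Finset.sum_congr rfl hcongr, h]
  simp only [hg]
  have e3 : u * (2 * (((N : ℤ) - s + 1 : ℤ) : ℝ) + (s : ℝ) - 1) - B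
      = u * (2 * (N : ℝ) - (s : ℝ) + 1) - B := by push_cast; ring
  have e4 : u * (2 * ((-(N : ℤ) : ℤ) : ℝ) + (s : ℝ) - 1) - B
      = -(u * (2 * (N : ℝ) - (s : ℝ) + 1)) - B := by push_cast; ring
  rw [e3, e4, key2]

theorem I2_paired_sum (M N : ℕ) (a b c z : ℝ)
    (hz : ∀ s : ℤ, 1 ≤ s → s ≤ 2 * N → Real.sin (2 * π * z * s) ≠ 0)
    (f : ℤ → ℤ → ℝ)
    (hf : ∀ m n : ℤ, f m n = -a * m - b * n + c * m ^ 2 + z * n ^ 2) :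
    ∑ s ∈ Finset.Icc (1 : ℤ) (2 * N), ∑ m ∈ Finset.Icc (-(M : ℤ)) M,
        ∑ n ∈ Finset.Icc (-(N : ℤ)) (N - s),
          (Complex.exp (2 * π * Complex.I * (f m (n + s) - f m n)) +
            Complex.exp (2 * π * Complex.I * (f m n - f m (n + s)))) =
      ((2 * (2 * M + 1) *
        ∑ s ∈ Finset.Icc (1 : ℤ) (2 * N), Phi z s N * Real.cos (2 * π * b * s) : ℝ) : ℂ) := by
  have hmain : ∀ s ∈ Finset.Icc (1 : ℤ) (2 * N),
      ∑ m ∈ Finset.Icc (-(M : ℤ)) M, ∑ n ∈ Finset.Icc (-(N : ℤ)) (N - s),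
          (Complex.exp (2 * π * Complex.I * (f m (n + s) - f m n)) +
            Complex.exp (2 * π * Complex.I * (f m n - f m (n + s)))) =
        (((2 * M + 1 : ℝ) * (2 * Phi z s N * Real.cos (2 * π * b * s)) : ℝ) : ℂ) := by
    intro s hs
    rw [Finset.mem_Icc] at hs
    obtain ⟨hs1, hs2⟩ := hs
    have hs2' : s ≤ 2 * (N : ℤ) := by exact_mod_cast hs2
    have husin : Real.sin (2 * π * z * s) ≠ 0 := hz s hs1 hs2
    have hinner : ∀ m : ℤ, ∑ n ∈ Finset.Icc (-(N : ℤ)) (N - s),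
        (Complex.exp (2 * π * Complex.I * (f m (n + s) - f m n)) +
          Complex.exp (2 * π * Complex.I * (f m n - f m (n + s)))) =
        ((2 * Phi z s N * Real.cos (2 * π * b * s) : ℝ) : ℂ) := by
      intro m
      have hterm : ∀ n ∈ Finset.Icc (-(N : ℤ)) ((N : ℤ) - s),
          (Complex.exp (2 * π * Complex.I * (f m (n + s) - f m n)) +
            Complex.exp (2 * π * Complex.I * (f m n - f m (n + s)))) =
          ((2 * Real.cos (2 * π * z * s * (2 * (n : ℝ) + (s : ℝ)) - 2 * π * b * s) : ℝ) : ℂ) := by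
        intro n _
        have harg : (2 * π * Complex.I * ((f m (n + s) : ℝ) - (f m n : ℝ))) =
            ((2 * π * z * s * (2 * (n : ℝ) + (s : ℝ)) - 2 * π * b * s : ℝ) : ℂ) * Complex.I := by
          rw [hf, hf]
          push_cast
          ring
        have harg' : (2 * π * Complex.I * ((f m n : ℝ) - (f m (n + s) : ℝ))) =
            (-((2 * π * z * s * (2 * (n : ℝ) + (s : ℝ)) - 2 * π * b * s : ℝ) : ℂ)) * Complex.I := by
          rw [hf, hf]
          push_cast
          ring
        rw [harg, harg']
        have hcos : Complex.exp
              (((2 * π * z * s * (2 * (n : ℝ) + (s : ℝ)) - 2 * π * b * s : ℝ) : ℂ) * Complex.I) +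
            Complex.exp ((-((2 * π * z * s * (2 * (n : ℝ) + (s : ℝ)) - 2 * π * b * s : ℝ) : ℂ)) *
              Complex.I) =
            2 * Complex.cos ((2 * π * z * s * (2 * (n : ℝ) + (s : ℝ)) - 2 * π * b * s : ℝ) : ℂ) := by
          rw [Complex.cos]; ring
        rw [hcos, ← Complex.ofReal_cos]
        push_cast
        ring
      rw [Finset.sum_congr rfl hterm, ← Complex.ofReal_sum]
      norm_cast
      have hsum := cos_sum (2 * π * z * s) (2 * π * b * s) s N hs2
      rw [Phi]
      push_cast
      field_simp
      push_cast at hsum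
      have e5 : ∀ x : ℤ, 2 * π * (s : ℝ) * (z * (2 * (x : ℝ) + s) - b)
          = 2 * π * z * s * (2 * (x : ℝ) + s) - 2 * π * b * s := by intro x; ring
      simp only [e5, show 2 * π * (s : ℝ) * b = 2 * π * b * s by ring]
      linear_combination hsum
    rw [Finset.sum_congr rfl (fun m _ => hinner m), Finset.sum_const]
    have hcard : (Finset.Icc (-(M : ℤ)) M).card = 2 * M + 1 := by
      rw [Int.card_Icc]
      omega
    rw [hcard, nsmul_eq_mul]
    push_cast
    ring
  rw [Finset.sum_congr rfl hmain, ← Complex.ofReal_sum]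
  norm_cast
  rw [Finset.mul_sum]
  apply Finset.sum_congr rfl
  intro s _
  push_cast
  ring
end

section
/- Let M, N be natural numbers, let a, b, c, z be real numbers, and let r, s be integers with 1 ≤ r ≤ 2M, 1 ≤ s ≤ 2N, sin(2πcr) ≠ 0, and sin(2πzs) ≠ 0. Then ∑_{m=-M}^{M-r} ∑_{n=-N}^{N-s} cos(2π·(-a·r − b·s + c·(r² + 2mr) + z·(s² + 2ns))) = Φ(c,r,M)·Φ(z,s,N)·cos(2π(ar + bs)). -/
open Real Finset

lemma sum_cos_range (θ β : ℝ) (K : ℕ) (h : Real.sin (β/2) ≠ 0) :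
    ∑ k ∈ range K, Real.cos (θ + k * β) =
      Real.cos (θ + (K - 1) * β / 2) * Real.sin (K * β / 2) / Real.sin (β / 2) := by
  rw [eq_div_iff h]
  set g : ℕ → ℝ := fun k => Real.sin (θ + k * β - β/2) with hg
  have key : ∀ k : ℕ, Real.cos (θ + k * β) * Real.sin (β / 2) = (g (k+1) - g k) / 2 := by
    intro k
    simp only [hg]
    rw [Real.sin_sub_sin]
    push_cast
    ring_nf
  calc (∑ k ∈ range K, Real.cos (θ + k * β)) * Real.sin (β/2)
      = ∑ k ∈ range K, (g (k+1) - g k) / 2 := by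
        rw [Finset.sum_mul]; exact Finset.sum_congr rfl fun k _ => key k
    _ = (∑ k ∈ range K, (g (k+1) - g k)) / 2 := by rw [Finset.sum_div]
    _ = (g K - g 0) / 2 := by rw [Finset.sum_range_sub g]
    _ = Real.cos (θ + (K - 1) * β / 2) * Real.sin (K * β / 2) := by
        simp only [hg]
        rw [Real.sin_sub_sin]
        push_cast
        ring_nf

lemma sum_cos_Icc (θ β : ℝ) (lo hi : ℤ) (hle : lo ≤ hi) (h : Real.sin (β/2) ≠ 0) :
    ∑ k ∈ Finset.Icc lo hi, Real.cos (θ + k * β) =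
      Real.cos (θ + (lo + hi) * β / 2) * Real.sin ((hi - lo + 1) * β / 2) / Real.sin (β / 2) := by
  have hseteq : Finset.Icc lo hi = (range (hi + 1 - lo).toNat).map
      ⟨fun k : ℕ => lo + (k : ℤ), fun x y hxy => by simpa using hxy⟩ := by
    ext x
    simp only [Finset.mem_Icc, Finset.mem_map, Finset.mem_range, Function.Embedding.coeFn_mk]
    constructor
    · rintro ⟨h1, h2⟩; exact ⟨(x - lo).toNat, by omega, by show lo + ((x - lo).toNat : ℤ) = x; omega⟩
    · rintro ⟨k, hk, hkx⟩; change lo + (k : ℤ) = x at hkx; omega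
  have hK : ((hi + 1 - lo).toNat : ℤ) = hi + 1 - lo := Int.toNat_of_nonneg (by omega)
  have key := sum_cos_range (θ + lo * β) β (hi + 1 - lo).toNat h
  rw [hseteq, Finset.sum_map]
  change ∑ k ∈ range (hi+1-lo).toNat, Real.cos (θ + ((lo : ℤ) + (k:ℤ) : ℤ) * β) = _
  rw [show (∑ k ∈ range (hi+1-lo).toNat, Real.cos (θ + ((lo : ℤ) + (k:ℤ) : ℤ) * β)) =
      ∑ k ∈ range (hi+1-lo).toNat, Real.cos ((θ + lo * β) + k * β) from
    Finset.sum_congr rfl fun k _ => by push_cast; ring_nf, key]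
  have h1 : ((hi + 1 - lo).toNat : ℝ) = (hi : ℝ) + 1 - lo := by
    exact_mod_cast congrArg (Int.cast : ℤ → ℝ) hK
  rw [h1]; ring_nf

theorem inner_sum_I4 (M N : ℕ) (a b c z : ℝ) (r s : ℤ)
    (hr1 : 1 ≤ r) (hr2 : r ≤ 2 * M) (hs1 : 1 ≤ s) (hs2 : s ≤ 2 * N)
    (hc : Real.sin (2 * π * c * r) ≠ 0) (hz : Real.sin (2 * π * z * s) ≠ 0) :
    ∑ m ∈ Finset.Icc (-(M : ℤ)) (M - r), ∑ n ∈ Finset.Icc (-(N : ℤ)) (N - s),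
        Real.cos (2 * π * (-a * r - b * s + c * ((r : ℝ) ^ 2 + 2 * m * r)
          + z * ((s : ℝ) ^ 2 + 2 * n * s))) =
      Phi c r M * Phi z s N * Real.cos (2 * π * (a * r + b * s)) := by
  have hz' : Real.sin ((4 * π * z * s) / 2) ≠ 0 := by
    convert hz using 2; ring
  have hc' : Real.sin ((4 * π * c * r) / 2) ≠ 0 := by
    convert hc using 2; ring
  have hinner : ∀ m : ℤ,
      ∑ n ∈ Finset.Icc (-(N : ℤ)) (N - s),
        Real.cos (2 * π * (-a * r - b * s + c * ((r : ℝ) ^ 2 + 2 * m * r)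
          + z * ((s : ℝ) ^ 2 + 2 * n * s))) =
      Phi z s N * Real.cos (2 * π * (-a * r - b * s + c * ((r : ℝ) ^ 2 + 2 * m * r))) := by
    intro m
    have h1 : ∑ n ∈ Finset.Icc (-(N : ℤ)) (N - s),
        Real.cos (2 * π * (-a * r - b * s + c * ((r : ℝ) ^ 2 + 2 * m * r)
          + z * ((s : ℝ) ^ 2 + 2 * n * s))) =
        ∑ n ∈ Finset.Icc (-(N : ℤ)) (N - s),
        Real.cos ((2 * π * (-a * r - b * s + c * ((r : ℝ) ^ 2 + 2 * m * r)
          + z * (s : ℝ) ^ 2)) + n * (4 * π * z * s)) :=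
      Finset.sum_congr rfl fun n _ => by congr 1; ring
    rw [h1, sum_cos_Icc _ _ _ _ (by omega) hz']
    have h2 : ((-(N : ℤ) : ℤ) : ℝ) + (((N : ℤ) - s : ℤ) : ℝ) = -(s : ℝ) := by push_cast; ring
    have h3 : (((N : ℤ) - s : ℤ) : ℝ) - ((-(N : ℤ) : ℤ) : ℝ) + 1 = 2 * (N : ℝ) - s + 1 := by
      push_cast; ring
    rw [h2, h3, Phi]
    rw [show (2 * π * (-a * r - b * s + c * ((r : ℝ) ^ 2 + 2 * m * r) + z * (s : ℝ) ^ 2))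
        + -(s : ℝ) * (4 * π * z * s) / 2
        = 2 * π * (-a * r - b * s + c * ((r : ℝ) ^ 2 + 2 * m * r)) from by ring]
    rw [show (2 * (N : ℝ) - s + 1) * (4 * π * z * s) / 2
        = 2 * π * z * s * (2 * N - s + 1) from by ring]
    rw [show (4 * π * z * s) / 2 = 2 * π * z * s from by ring]
    ring
  calc ∑ m ∈ Finset.Icc (-(M : ℤ)) (M - r), ∑ n ∈ Finset.Icc (-(N : ℤ)) (N - s),
        Real.cos (2 * π * (-a * r - b * s + c * ((r : ℝ) ^ 2 + 2 * m * r)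
          + z * ((s : ℝ) ^ 2 + 2 * n * s)))
      = Phi z s N * ∑ m ∈ Finset.Icc (-(M : ℤ)) (M - r),
          Real.cos ((2 * π * (-a * r - b * s + c * (r : ℝ) ^ 2)) + m * (4 * π * c * r)) := by
        rw [Finset.mul_sum]
        refine Finset.sum_congr rfl fun m _ => ?_
        rw [hinner m]
        congr 2
        ring
    _ = Phi c r M * Phi z s N * Real.cos (2 * π * (a * r + b * s)) := by
        rw [sum_cos_Icc _ _ _ _ (by omega) hc']
        have h2 : ((-(M : ℤ) : ℤ) : ℝ) + (((M : ℤ) - r : ℤ) : ℝ) = -(r : ℝ) := by push_cast; ring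
        have h3 : (((M : ℤ) - r : ℤ) : ℝ) - ((-(M : ℤ) : ℤ) : ℝ) + 1 = 2 * (M : ℝ) - r + 1 := by
          push_cast; ring
        rw [h2, h3, Phi, Phi]
        rw [show (2 * π * (-a * r - b * s + c * (r : ℝ) ^ 2)) + -(r : ℝ) * (4 * π * c * r) / 2
            = -(2 * π * (a * r + b * s)) from by ring]
        rw [show (2 * (M : ℝ) - r + 1) * (4 * π * c * r) / 2
            = 2 * π * c * r * (2 * M - r + 1) from by ring]
        rw [show (4 * π * c * r) / 2 = 2 * π * c * r from by ring, Real.cos_neg]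
        ring
end

section
/- Let N be a natural number and let b be a real number with sin(πb) ≠ 0. Then ∑_{s=1}^{2N} (2N − s + 1)·cos(2πbs) ≤ 1/(2·sin²(πb)). -/
open Real Finset

/-- Fejér-type identity: the squared modulus of the Dirichlet sum equals a linearly
weighted cosine sum. -/
lemma cos_sin_sq_sum (θ : ℝ) (M : ℕ) :
    (∑ n ∈ Finset.range (M + 1), Real.cos (θ * n)) ^ 2 +
      (∑ n ∈ Finset.range (M + 1), Real.sin (θ * n)) ^ 2 =
    ((M : ℝ) + 1) + 2 * ∑ j ∈ Finset.range M, ((M : ℝ) - j) * Real.cos (θ * (j + 1)) := by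
  induction M with
  | zero => simp
  | succ M ih =>
    have hA : ∑ n ∈ Finset.range (M + 2), Real.cos (θ * n)
        = (∑ n ∈ Finset.range (M + 1), Real.cos (θ * n)) + Real.cos (θ * (M + 1)) := by
      rw [Finset.sum_range_succ]; push_cast; ring_nf
    have hB : ∑ n ∈ Finset.range (M + 2), Real.sin (θ * n)
        = (∑ n ∈ Finset.range (M + 1), Real.sin (θ * n)) + Real.sin (θ * (M + 1)) := by
      rw [Finset.sum_range_succ]; push_cast; ring_nf
    have hcross : (∑ n ∈ Finset.range (M + 1), Real.cos (θ * n)) * Real.cos (θ * (M + 1))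
        + (∑ n ∈ Finset.range (M + 1), Real.sin (θ * n)) * Real.sin (θ * (M + 1))
        = ∑ j ∈ Finset.range (M + 1), Real.cos (θ * (j + 1)) := by
      rw [Finset.sum_mul, Finset.sum_mul, ← Finset.sum_add_distrib]
      have h1 : ∀ n ∈ Finset.range (M + 1),
          Real.cos (θ * n) * Real.cos (θ * (M + 1)) + Real.sin (θ * n) * Real.sin (θ * (M + 1))
          = Real.cos (θ * ((M : ℝ) + 1 - n)) := by
        intro n _
        have he : θ * ((M : ℝ) + 1 - n) = θ * ((M : ℝ) + 1) - θ * n := by ring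
        rw [he, Real.cos_sub]
        ring
      rw [Finset.sum_congr rfl h1]
      -- reflect the sum
      have h2 := Finset.sum_range_reflect (fun j => Real.cos (θ * ((j : ℝ) + 1))) (M + 1)
      rw [← h2]
      refine Finset.sum_congr rfl ?_
      intro n hn
      rw [Finset.mem_range] at hn
      have hn' : n ≤ M := Nat.lt_succ_iff.mp hn
      have : ((M + 1 - 1 - n : ℕ) : ℝ) = (M : ℝ) - n := by
        simp only [Nat.add_sub_cancel]
        push_cast [Nat.cast_sub hn']
        ring
      rw [this]
      ring_nf
    have hstep : ∑ j ∈ Finset.range (M + 1), (((M : ℝ) + 1) - j) * Real.cos (θ * (j + 1))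
        = ∑ j ∈ Finset.range M, ((M : ℝ) - j) * Real.cos (θ * (j + 1))
          + ∑ j ∈ Finset.range (M + 1), Real.cos (θ * (j + 1)) := by
      rw [Finset.sum_range_succ (f := fun j => Real.cos (θ * (j + 1))),
        Finset.sum_range_succ (f := fun j => (((M : ℝ) + 1) - j) * Real.cos (θ * (j + 1)))]
      have : ∑ j ∈ Finset.range M, (((M : ℝ) + 1) - j) * Real.cos (θ * (j + 1))
          = ∑ j ∈ Finset.range M,
            (((M : ℝ) - j) * Real.cos (θ * (j + 1)) + Real.cos (θ * (j + 1))) := by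
        refine Finset.sum_congr rfl ?_
        intro j _; ring
      rw [this, Finset.sum_add_distrib]
      ring
    rw [hA, hB]
    push_cast [hstep]
    nlinarith [Real.sin_sq_add_cos_sq (θ * ((M : ℝ) + 1)), ih, hcross]

lemma dirichlet_sq_le (b : ℝ) (hb : Real.sin (π * b) ≠ 0) (M : ℕ) :
    (∑ n ∈ Finset.range M, Real.cos (2 * π * b * n)) ^ 2 +
      (∑ n ∈ Finset.range M, Real.sin (2 * π * b * n)) ^ 2 ≤ 1 / Real.sin (π * b) ^ 2 := by
  set z : ℂ := Complex.exp ((2 * π * b : ℝ) * Complex.I) with hz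
  have hzn : ∀ n : ℕ, z ^ n = Complex.exp ((2 * π * b * n : ℝ) * Complex.I) := by
    intro n
    rw [hz, ← Complex.exp_nat_mul]
    congr 1
    push_cast
    ring
  have hre : (∑ n ∈ Finset.range M, z ^ n).re = ∑ n ∈ Finset.range M, Real.cos (2 * π * b * n) := by
    rw [Complex.re_sum]
    refine Finset.sum_congr rfl fun n _ => ?_
    rw [hzn n, Complex.exp_ofReal_mul_I_re]
  have him : (∑ n ∈ Finset.range M, z ^ n).im = ∑ n ∈ Finset.range M, Real.sin (2 * π * b * n) := by
    rw [Complex.im_sum]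
    refine Finset.sum_congr rfl fun n _ => ?_
    rw [hzn n, Complex.exp_ofReal_mul_I_im]
  have hz1 : z ≠ 1 := by
    intro h
    rw [hz, Complex.exp_eq_one_iff] at h
    obtain ⟨n, hn⟩ := h
    have hI : ((2 * π * b : ℝ) : ℂ) = ((n * (2 * π) : ℝ) : ℂ) := by
      refine mul_right_cancel₀ Complex.I_ne_zero ?_
      rw [hn]; push_cast; ring
    have hr : 2 * π * b = n * (2 * π) := by exact_mod_cast hI
    have hr2 : (2 * π) * b = (2 * π) * n := by linarith
    have hbr : b = (n : ℝ) := mul_left_cancel₀ (ne_of_gt Real.two_pi_pos) hr2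
    apply hb
    rw [hbr, mul_comm]
    exact Real.sin_int_mul_pi n
  have hgeom : ∑ n ∈ Finset.range M, z ^ n = (z ^ M - 1) / (z - 1) := geom_sum_eq hz1 M
  have habs_z : ‖z‖ = 1 := by
    rw [hz]; exact Complex.norm_exp_ofReal_mul_I _
  have hnum : Complex.normSq (z ^ M - 1) ≤ 4 := by
    have h1 : ‖z ^ M - 1‖ ≤ 2 := by
      calc ‖z ^ M - 1‖ ≤ ‖z ^ M‖ + ‖(1 : ℂ)‖ := by
            exact norm_sub_le (z ^ M) 1
        _ = 2 := by rw [norm_pow, habs_z]; norm_num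
    have h2 : Complex.normSq (z ^ M - 1) = ‖z ^ M - 1‖ ^ 2 := (Complex.sq_norm _).symm
    nlinarith [norm_nonneg (z ^ M - 1)]
  have hden : Complex.normSq (z - 1) = 4 * Real.sin (π * b) ^ 2 := by
    have hzre : z.re = Real.cos (2 * π * b) := by rw [hz]; exact Complex.exp_ofReal_mul_I_re _
    have hzim : z.im = Real.sin (2 * π * b) := by rw [hz]; exact Complex.exp_ofReal_mul_I_im _
    have : Complex.normSq (z - 1) = (z.re - 1) ^ 2 + z.im ^ 2 := by
      rw [Complex.normSq_apply]
      simp [Complex.sub_re, Complex.sub_im]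
      ring
    rw [this, hzre, hzim]
    have hc2 : Real.cos (2 * π * b) = 1 - 2 * Real.sin (π * b) ^ 2 := by
      have : 2 * π * b = 2 * (π * b) := by ring
      rw [this, Real.cos_two_mul]
      nlinarith [Real.sin_sq_add_cos_sq (π * b)]
    nlinarith [Real.sin_sq_add_cos_sq (2 * π * b)]
  have hsq : (∑ n ∈ Finset.range M, Real.cos (2 * π * b * n)) ^ 2 +
      (∑ n ∈ Finset.range M, Real.sin (2 * π * b * n)) ^ 2
      = Complex.normSq (∑ n ∈ Finset.range M, z ^ n) := by
    rw [Complex.normSq_apply, hre, him]; ring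
  rw [hsq, hgeom, Complex.normSq_div, hden]
  have hs2 : Real.sin (π * b) ^ 2 > 0 := by positivity
  rw [div_le_div_iff₀ (by positivity) (by positivity)]
  nlinarith [hnum]

theorem weighted_cos_sum_le (N : ℕ) (b : ℝ) (hb : Real.sin (π * b) ≠ 0) :
    ∑ s ∈ Finset.Icc 1 (2 * N), (2 * (N : ℝ) - s + 1) * Real.cos (2 * π * b * s) ≤
      1 / (2 * Real.sin (π * b) ^ 2) := by
  set θ := 2 * π * b with hθ
  have hkey := cos_sin_sq_sum θ (2 * N)
  have hbound := dirichlet_sq_le b hb (2 * N + 1)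
  have hsum_eq : ∑ s ∈ Finset.Icc 1 (2 * N), (2 * (N : ℝ) - s + 1) * Real.cos (2 * π * b * s)
      = ∑ j ∈ Finset.range (2 * N), ((2 * N : ℝ) - j) * Real.cos (θ * (j + 1)) := by
    rw [← Finset.Ico_add_one_right_eq_Icc, Finset.sum_Ico_eq_sum_range]
    norm_num
    refine Finset.sum_congr rfl fun j _ => ?_
    push_cast
    simp only [hθ]
    ring_nf
  rw [hsum_eq]
  have hs2 : Real.sin (π * b) ^ 2 > 0 := by
    positivity
  have hN : (0 : ℝ) ≤ 2 * (N : ℝ) := by positivity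
  have h1 : ((2 * N : ℕ) : ℝ) = 2 * (N : ℝ) := by push_cast; ring
  rw [h1] at hkey
  have h2 : 1 / (2 * Real.sin (π * b) ^ 2) = (1 / Real.sin (π * b) ^ 2) / 2 := by
    field_simp
  rw [h2]
  have : (2 * (N : ℝ) + 1) + 2 * ∑ j ∈ Finset.range (2 * N), ((2 * N : ℝ) - j) * Real.cos (θ * (j + 1))
      ≤ 1 / Real.sin (π * b) ^ 2 := by
    rw [← hkey]
    convert hbound using 3 <;> push_cast <;> ring
  push_cast at this ⊢
  linarith
end

section
/- Let M, N be natural numbers and let a, b be real numbers with sin(πa) ≠ 0 and sin(πb) ≠ 0. Then the far-field (c = z = 0) uniform-planar-array resolution Δ = (1/((2M+1)(2N+1))²)·|∑_{m=-M}^{M} ∑_{n=-N}^{N} exp(2πi·(-a·m − b·n))|² satisfies Δ = sin²((2M+1)πa)·sin²((2N+1)πb)/((2M+1)²·(2N+1)²·sin²(πa)·sin²(πb)) ≤ 1/((2M+1)²·(2N+1)²·sin²(πa)·sin²(πb)); consequently Δ tends to 0 as min(M, N) tends to infinity. -/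
open Real Finset Filter

lemma dk (x : ℝ) (M : ℕ) :
    (∑ m ∈ Finset.Icc (-(M:ℤ)) M, Complex.exp (2*π*Complex.I*(x*m))) * Complex.sin (π*x)
      = Complex.sin ((2*(M:ℂ)+1)*π*x) := by
  induction M with
  | zero => norm_num
  | succ M ih =>
    have hset : Finset.Icc (-((M:ℤ)+1)) ((M:ℤ)+1)
        = insert (-((M:ℤ)+1)) (insert ((M:ℤ)+1) (Finset.Icc (-(M:ℤ)) M)) := by
      ext k; simp only [Finset.mem_Icc, Finset.mem_insert]; omega
    have h1 : (-((M:ℤ)+1)) ∉ insert ((M:ℤ)+1) (Finset.Icc (-(M:ℤ)) M) := by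
      simp only [Finset.mem_Icc, Finset.mem_insert]; omega
    have h2 : ((M:ℤ)+1) ∉ Finset.Icc (-(M:ℤ)) M := by
      simp only [Finset.mem_Icc]; omega
    have harg1 : (2*(π:ℂ)*Complex.I*(x*((-((M:ℤ)+1)):ℤ))) = (-(2*π*x*((M:ℂ)+1)))*Complex.I := by
      push_cast; ring
    have harg2 : (2*(π:ℂ)*Complex.I*(x*(((M:ℤ)+1):ℤ))) = (2*π*x*((M:ℂ)+1))*Complex.I := by
      push_cast; ring
    have key : ∀ w y : ℂ, (Complex.sin (w - y) = Complex.sin (w+y) - 2*Complex.cos w * Complex.sin y) := by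
      intro w y; rw [Complex.sin_sub, Complex.sin_add]; ring
    have e1 : (2*(M:ℂ)+1)*π*x = 2*(π:ℂ)*x*((M:ℂ)+1) - π*x := by ring
    have e2 : (2*((M+1:ℕ):ℂ)+1)*π*x = 2*(π:ℂ)*x*((M:ℂ)+1) + π*x := by push_cast; ring
    rw [show (-((M+1:ℕ):ℤ)) = -((M:ℤ)+1) by push_cast; ring,
        show (((M+1:ℕ)):ℤ) = (M:ℤ)+1 by push_cast; ring] at *
    rw [hset, Finset.sum_insert h1, Finset.sum_insert h2, harg1, harg2,
        Complex.exp_mul_I, Complex.exp_mul_I, Complex.sin_neg, Complex.cos_neg]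
    rw [e2]
    rw [e1] at ih
    linear_combination ih + key (2*(π:ℂ)*x*((M:ℂ)+1)) ((π:ℂ)*x)

lemma dk2 (x : ℝ) (hx : Real.sin (π*x) ≠ 0) (M : ℕ) :
    (∑ m ∈ Finset.Icc (-(M:ℤ)) M, Complex.exp (2*π*Complex.I*(-x*m)))
      = ((Real.sin ((2*(M:ℝ)+1)*π*x) / Real.sin (π*x) : ℝ) : ℂ) := by
  have h := dk (-x) M
  have c1 : ((π:ℂ) * ((-x:ℝ):ℂ)) = -((π:ℝ)*x : ℝ) := by push_cast; ring
  have c2 : ((2*(M:ℂ)+1)*π*((-x:ℝ):ℂ)) = -(((2*(M:ℝ)+1)*π*x : ℝ)) := by push_cast; ring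
  have c3 : ∀ m : ℤ, (2*(π:ℂ)*Complex.I*(((-x:ℝ):ℂ)*m)) = 2*π*Complex.I*(-(x:ℂ)*m) := by
    intro m; push_cast; ring
  simp only [c3] at h
  rw [c1, c2, Complex.sin_neg, Complex.sin_neg, ← Complex.ofReal_sin, ← Complex.ofReal_sin,
    mul_neg, neg_eq_iff_eq_neg, neg_neg] at h
  rw [Complex.ofReal_div, eq_div_iff (by exact_mod_cast hx)]
  exact h

theorem far_field_upa_resolution (a b : ℝ)
    (ha : Real.sin (π * a) ≠ 0) (hb : Real.sin (π * b) ≠ 0)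
    (Δ : ℕ → ℕ → ℝ)
    (hΔ : ∀ M N : ℕ, Δ M N = (1 / ((2 * (M : ℝ) + 1) * (2 * (N : ℝ) + 1)) ^ 2) *
      ‖∑ m ∈ Finset.Icc (-(M : ℤ)) M, ∑ n ∈ Finset.Icc (-(N : ℤ)) N,
        Complex.exp (2 * π * Complex.I * (-a * m - b * n))‖ ^ 2) :
    (∀ M N : ℕ, Δ M N =
      Real.sin ((2 * (M : ℝ) + 1) * π * a) ^ 2 * Real.sin ((2 * (N : ℝ) + 1) * π * b) ^ 2 /
        ((2 * (M : ℝ) + 1) ^ 2 * (2 * (N : ℝ) + 1) ^ 2 *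
          Real.sin (π * a) ^ 2 * Real.sin (π * b) ^ 2)) ∧
    (∀ M N : ℕ, Δ M N ≤
      1 / ((2 * (M : ℝ) + 1) ^ 2 * (2 * (N : ℝ) + 1) ^ 2 *
        Real.sin (π * a) ^ 2 * Real.sin (π * b) ^ 2)) ∧
    Tendsto (fun p : ℕ × ℕ => Δ p.1 p.2)
      (Filter.comap (fun p : ℕ × ℕ => min p.1 p.2) atTop) (nhds 0) := by
  -- the double sum factors and evaluates
  have hsum : ∀ M N : ℕ,
      (∑ m ∈ Finset.Icc (-(M : ℤ)) M, ∑ n ∈ Finset.Icc (-(N : ℤ)) N,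
        Complex.exp (2 * π * Complex.I * (-a * m - b * n)))
      = ((Real.sin ((2*(M:ℝ)+1)*π*a) / Real.sin (π*a)
          * (Real.sin ((2*(N:ℝ)+1)*π*b) / Real.sin (π*b)) : ℝ) : ℂ) := by
    intro M N
    have hfac : ∀ m n : ℤ, Complex.exp (2*π*Complex.I*(-a*m - b*n))
        = Complex.exp (2*π*Complex.I*(-a*m)) * Complex.exp (2*π*Complex.I*(-b*n)) := by
      intro m n; rw [← Complex.exp_add]; ring_nf
    simp_rw [hfac, ← Finset.mul_sum]
    rw [← Finset.sum_mul, dk2 a ha M, dk2 b hb N, ← Complex.ofReal_mul]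
  -- part 1
  have part1 : ∀ M N : ℕ, Δ M N =
      Real.sin ((2 * (M : ℝ) + 1) * π * a) ^ 2 * Real.sin ((2 * (N : ℝ) + 1) * π * b) ^ 2 /
        ((2 * (M : ℝ) + 1) ^ 2 * (2 * (N : ℝ) + 1) ^ 2 *
          Real.sin (π * a) ^ 2 * Real.sin (π * b) ^ 2) := by
    intro M N
    have hM : (2*(M:ℝ)+1) ≠ 0 := by positivity
    have hN : (2*(N:ℝ)+1) ≠ 0 := by positivity
    rw [hΔ, hsum, Complex.norm_real, Real.norm_eq_abs, sq_abs]
    field_simp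
  have part2 : ∀ M N : ℕ, Δ M N ≤
      1 / ((2 * (M : ℝ) + 1) ^ 2 * (2 * (N : ℝ) + 1) ^ 2 *
        Real.sin (π * a) ^ 2 * Real.sin (π * b) ^ 2) := ?_
  refine ⟨part1, part2, ?_⟩
  swap
  · intro M N
    rw [part1]
    have hD : (0:ℝ) < (2 * (M : ℝ) + 1) ^ 2 * (2 * (N : ℝ) + 1) ^ 2 *
        Real.sin (π * a) ^ 2 * Real.sin (π * b) ^ 2 := by positivity
    gcongr
    nlinarith [Real.sin_sq_le_one ((2 * (M : ℝ) + 1) * π * a),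
      Real.sin_sq_le_one ((2 * (N : ℝ) + 1) * π * b),
      sq_nonneg (Real.sin ((2 * (M : ℝ) + 1) * π * a)),
      sq_nonneg (Real.sin ((2 * (N : ℝ) + 1) * π * b))]
  · -- convergence
    have hspos : (0:ℝ) < Real.sin (π*a)^2 * Real.sin (π*b)^2 := by positivity
    have hg : Tendsto (fun k : ℕ =>
        1/((2*(k:ℝ)+1)^2 * (Real.sin (π*a)^2 * Real.sin (π*b)^2))) atTop (nhds 0) := by
      have h1 : Tendsto (fun k : ℕ =>
          (2*(k:ℝ)+1)^2 * (Real.sin (π*a)^2 * Real.sin (π*b)^2)) atTop atTop := by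
        apply Filter.Tendsto.atTop_mul_const hspos
        apply tendsto_atTop_mono
          (fun k => by nlinarith [Nat.cast_nonneg (α := ℝ) k] : ∀ k : ℕ, (k:ℝ) ≤ (2*(k:ℝ)+1)^2)
        exact tendsto_natCast_atTop_atTop
      simpa [one_div, Pi.inv_def] using h1.inv_tendsto_atTop
    have hcomp : Tendsto (fun p : ℕ × ℕ =>
        1/((2*((min p.1 p.2 : ℕ):ℝ)+1)^2 * (Real.sin (π*a)^2 * Real.sin (π*b)^2)))
        (Filter.comap (fun p : ℕ × ℕ => min p.1 p.2) atTop) (nhds 0) :=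
      hg.comp tendsto_comap
    refine tendsto_of_tendsto_of_tendsto_of_le_of_le tendsto_const_nhds hcomp ?_ ?_
    · intro p
      dsimp only
      rw [hΔ]
      positivity
    · intro p
      refine (part2 p.1 p.2).trans ?_
      have hk1 : ((min p.1 p.2 : ℕ):ℝ) ≤ (p.1 : ℝ) := Nat.cast_le.mpr (min_le_left _ _)
      have hk2 : ((min p.1 p.2 : ℕ):ℝ) ≤ (p.2 : ℝ) := Nat.cast_le.mpr (min_le_right _ _)
      have hk0 : (0:ℝ) ≤ ((min p.1 p.2 : ℕ):ℝ) := Nat.cast_nonneg _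
      apply one_div_le_one_div_of_le (by positivity)
      have hPQ : (2*((min p.1 p.2 : ℕ):ℝ)+1)^2 ≤ (2*(p.1:ℝ)+1)^2*(2*(p.2:ℝ)+1)^2 := by
        have e3 : (0:ℝ) ≤ 2*((min p.1 p.2 : ℕ):ℝ)+1 := by linarith
        have e4 : (2*((min p.1 p.2 : ℕ):ℝ)+1)^2 ≤ (2*(p.1:ℝ)+1)*(2*(p.2:ℝ)+1) := by nlinarith
        have e5 : (1:ℝ) ≤ (2*(p.1:ℝ)+1)*(2*(p.2:ℝ)+1) := by nlinarith
        nlinarith [e4, e5]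
      have := mul_le_mul_of_nonneg_right hPQ hspos.le
      linarith [this]
end
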